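/- Let g be an invertible 3×3 real symmetric matrix, g8 an invertible 8×8 real symmetric matrix, and c, ω ∈ ℝ with s := 1 + c·ω > 0. Then M_hat(g, g8, c, ω) = M_check(s^(4/3)·g, s^(−2/3)·g8, s·c, ω/s). Thus the two orderings of the 3-form factor and the trivector factor in the generalised vielbein are related by this field redefinition, so the hatted and checked frames describe the same generalised metric. -/

import Mathlib

open Matrix

/-- The hatted-frame generalised metric, with both a 3-form c and a trivector ω. -/
noncomputable def Mhat (g : Matrix (Fin 3) (Fin 3) ℝ) (g8 : Matrix (Fin 8) (Fin 8) ℝ)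
    (c ω : ℝ) : Matrix ((Fin 3 ⊕ Fin 3) ⊕ Fin 8) ((Fin 3 ⊕ Fin 3) ⊕ Fin 8) ℝ :=
  |g.det * g8.det| ^ (-(1 : ℝ) / 2) •
    fromBlocks
      (fromBlocks (((1 + c * ω) ^ 2 + c ^ 2 / g.det) • g)
        (((1 + c * ω) * ω + c / g.det) • g)
        (((1 + c * ω) * ω + c / g.det) • g)
        ((ω ^ 2 + 1 / g.det) • g))
      0 0 g8

/-- The checked-frame generalised metric, with both a 3-form c and a trivector ω. -/
noncomputable def Mcheck (g : Matrix (Fin 3) (Fin 3) ℝ) (g8 : Matrix (Fin 8) (Fin 8) ℝ)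
    (c ω : ℝ) : Matrix ((Fin 3 ⊕ Fin 3) ⊕ Fin 8) ((Fin 3 ⊕ Fin 3) ⊕ Fin 8) ℝ :=
  |g.det * g8.det| ^ (-(1 : ℝ) / 2) •
    fromBlocks
      (fromBlocks ((1 + c ^ 2 / g.det) • g)
        ((ω + c * (1 + c * ω) / g.det) • g)
        ((ω + c * (1 + c * ω) / g.det) • g)
        ((ω ^ 2 + (1 + c * ω) ^ 2 / g.det) • g))
      0 0 g8

/-- det of a scalar multiple of an n×n real matrix. -/
lemma mydet (n : ℕ) (r : ℝ) (A : Matrix (Fin n) (Fin n) ℝ) :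
    (r • A).det = r ^ n * A.det := by
  rw [Matrix.det_smul, Fintype.card_fin]

/-- For invertible symmetric g (3×3) and g8 (8×8) and c, ω ∈ ℝ with s := 1 + c·ω > 0,
the hatted-frame generalised metric equals the checked-frame one with
g → s^(4/3)·g, g8 → s^(−2/3)·g8, c → s·c, ω → ω/s. -/
theorem stmt_7 (g : Matrix (Fin 3) (Fin 3) ℝ) (g8 : Matrix (Fin 8) (Fin 8) ℝ)
    (hg : g.IsSymm) (hgdet : g.det ≠ 0) (hg8 : g8.IsSymm) (hg8det : g8.det ≠ 0)
    (c ω : ℝ) (hs : 0 < 1 + c * ω) :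
    Mhat g g8 c ω =
      Mcheck ((1 + c * ω) ^ ((4 : ℝ) / 3) • g) ((1 + c * ω) ^ (-(2 : ℝ) / 3) • g8)
        ((1 + c * ω) * c) (ω / (1 + c * ω)) := by
  set s := 1 + c * ω with hs_def
  have hs0 : s ≠ 0 := hs.ne'
  set t := s ^ ((1:ℝ)/3) with ht_def
  have ht : 0 < t := Real.rpow_pos_of_pos hs _
  have ht0 : t ≠ 0 := ht.ne'
  have ht3 : t ^ 3 = s := by
    rw [ht_def, ← Real.rpow_natCast (s ^ ((1:ℝ)/3)) 3, ← Real.rpow_mul hs.le]; norm_num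
  have h1 : s ^ ((4:ℝ)/3) = t ^ 4 := by
    rw [ht_def, ← Real.rpow_natCast (s ^ ((1:ℝ)/3)) 4, ← Real.rpow_mul hs.le]; norm_num
  have h2 : s ^ (-(2:ℝ)/3) = (t ^ 2)⁻¹ := by
    rw [ht_def, ← Real.rpow_natCast (s ^ ((1:ℝ)/3)) 2, ← Real.rpow_mul hs.le,
      ← Real.rpow_neg hs.le]
    norm_num
  have hdg : ((t ^ 4) • g).det = t ^ 12 * g.det := by
    rw [mydet, ← pow_mul]
  have hdg8 : ((t ^ 2)⁻¹ • g8).det = (t ^ 16)⁻¹ * g8.det := by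
    rw [mydet, inv_pow, ← pow_mul]
  have habs : |((t ^ 4) • g).det * ((t ^ 2)⁻¹ • g8).det| = (t ^ 4)⁻¹ * |g.det * g8.det| := by
    rw [hdg, hdg8, show t ^ 12 * g.det * ((t ^ 16)⁻¹ * g8.det) = (t ^ 4)⁻¹ * (g.det * g8.det) by
      field_simp, abs_mul, abs_of_pos (by positivity)]
  have hpref : ((t ^ 4)⁻¹ * |g.det * g8.det|) ^ (-(1:ℝ)/2)
      = t ^ 2 * |g.det * g8.det| ^ (-(1:ℝ)/2) := by
    rw [Real.mul_rpow (by positivity) (abs_nonneg _)]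
    congr 1
    rw [show ((t ^ 4)⁻¹ : ℝ) = t ^ (-(4:ℝ)) by
      rw [← Real.rpow_natCast t 4, ← Real.rpow_neg ht.le]; norm_num,
      ← Real.rpow_mul ht.le]
    norm_num
  rw [Mhat, Mcheck, h1, h2, habs, hpref, hdg, mul_comm (t ^ 2) _, mul_smul]
  congr 1
  have ht2 : (t:ℝ) ^ 2 ≠ 0 := pow_ne_zero _ ht0
  simp only [Matrix.fromBlocks_smul, smul_smul, smul_zero]
  rw [← hs_def]
  have key : t ^ 3 * c * (ω / t ^ 3) = c * ω := by field_simp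
  rw [← ht3, key, ← hs_def, ← ht3]
  have e1 : t ^ 2 * ((1 + (t ^ 3 * c) ^ 2 / (t ^ 12 * g.det)) * t ^ 4)
      = (t ^ 3) ^ 2 + c ^ 2 / g.det := by field_simp
  have e2 : t ^ 2 * ((ω / t ^ 3 + t ^ 3 * c * t ^ 3 / (t ^ 12 * g.det)) * t ^ 4)
      = t ^ 3 * ω + c / g.det := by field_simp
  have e3 : t ^ 2 * (((ω / t ^ 3) ^ 2 + (t ^ 3) ^ 2 / (t ^ 12 * g.det)) * t ^ 4)
      = ω ^ 2 + 1 / g.det := by field_simp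
  rw [e1, e2, e3, mul_inv_cancel₀ ht2, one_smul]
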